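/- Let h be any Lie subalgebra of g = ⟨A⟩ ⊕ 𝓔 ⊕ T𝓔 ⊕ ⋯ ⊕ T^{m−1}𝓔 ⊆ gl(U) containing s = ⟨A⟩ ⊕ ⟨T⟩. Then U is a uniserial h-module if and only if s₁ = s₂ = ⋯ = s_m = 1. -/

import Mathlib

open Polynomial

attribute [local instance 100] LieRing.ofAssociativeRing

/-- The shifted polynomial `p_{i+1}(X) = p₁(X + i)`: we use 0-based indexing for the
paper's `p_i(X) = p₁(X + (i−1))`, `1 ≤ i ≤ m`. -/
noncomputable def pShift {F : Type*} [Field F] (q : Polynomial F) (i : ℕ) : Polynomial F :=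
  q.comp (X + C (i : F))

/-- The `F[X]`-module `U = U₁ ⊕ ⋯ ⊕ U_m`, where `U_{i+1} = F[X]·u_{i+1} ≅
F[X]/(p_{i+1}^{s_{i+1}})` (0-based indexing). -/
def Uspace (F : Type*) [Field F] (q : Polynomial F) (m : ℕ) (s : Fin m → ℕ) : Type _ :=
  (i : Fin m) → Polynomial F ⧸ Ideal.span {(pShift q i) ^ (s i)}

noncomputable instance {F : Type*} [Field F] (q : Polynomial F) (m : ℕ) (s : Fin m → ℕ) :
    AddCommGroup (Uspace F q m s) :=
  inferInstanceAs (AddCommGroup ((i : Fin m) → Polynomial F ⧸ Ideal.span {(pShift q i) ^ (s i)}))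

noncomputable instance {F : Type*} [Field F] (q : Polynomial F) (m : ℕ) (s : Fin m → ℕ) :
    Module F (Uspace F q m s) :=
  inferInstanceAs (Module F ((i : Fin m) → Polynomial F ⧸ Ideal.span {(pShift q i) ^ (s i)}))

/-- The operator `A ∈ End_F(U)`: multiplication by `X`. -/
noncomputable def Aop (F : Type*) [Field F] (q : Polynomial F) (m : ℕ) (s : Fin m → ℕ) :
    Module.End F (Uspace F q m s) :=
  LinearMap.pi fun i =>
    (LinearMap.mulLeft F (Ideal.Quotient.mk (Ideal.span {(pShift q i) ^ (s i)}) X)).comp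
      (LinearMap.proj i)

/-- The operator `E ∈ End_F(U)`: the `F[X]`-linear map with `E u_i = (X + (i−1)) u_i`
(0-based: on the `i`-th component it is multiplication by `X + i`). -/
noncomputable def Eop (F : Type*) [Field F] (q : Polynomial F) (m : ℕ) (s : Fin m → ℕ) :
    Module.End F (Uspace F q m s) :=
  LinearMap.pi fun i =>
    (LinearMap.mulLeft F
        (Ideal.Quotient.mk (Ideal.span {(pShift q i) ^ (s i)}) (X + C (i : F)))).comp
      (LinearMap.proj i)

/-- Componentwise multiplication by the polynomial `g` on `U` (the action `u ↦ g(X)·u`). -/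
noncomputable def polySmul {F : Type*} [Field F] {q : Polynomial F} {m : ℕ} {s : Fin m → ℕ}
    (g : Polynomial F) (u : Uspace F q m s) : Uspace F q m s :=
  fun i => Ideal.Quotient.mk (Ideal.span {(pShift q i) ^ (s i)}) g * u i

/-- The canonical generator `u_{i+1}` of the summand `U_{i+1}` (0-based). -/
noncomputable def uGen (F : Type*) [Field F] (q : Polynomial F) (m : ℕ) (s : Fin m → ℕ)
    (i : Fin m) : Uspace F q m s :=
  Pi.single i 1

/-- The standing assumptions on the data: `p₁ = q` is monic irreducible of degree `d`,
`m > 1`, and `s₁ ≥ s₂ ≥ ⋯ ≥ s_m ≥ 1`. -/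
structure GoodData (F : Type*) [Field F] (q : Polynomial F) (d m : ℕ) (s : Fin m → ℕ) :
    Prop where
  monic : q.Monic
  irr : Irreducible q
  deg : q.natDegree = d
  hm : 1 < m
  dec : ∀ i j : Fin m, i ≤ j → s j ≤ s i
  pos : ∀ i, 1 ≤ s i

/-- `T` is the operator of the paper: the unique `F`-linear endomorphism of `U` with
`T u₁ = 0`, `T u_i = p_{i−1}(X)^{s_{i−1}−s_i} u_{i−1}` for `2 ≤ i ≤ m`, and
`T(g(X+1)·u) = g(X)·(T u)` for all `g ∈ F[X]`, `u ∈ U`. -/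
def IsTmap {F : Type*} [Field F] (q : Polynomial F) (m : ℕ) (s : Fin m → ℕ)
    (T : Module.End F (Uspace F q m s)) : Prop :=
  (∀ h0 : 0 < m, T (uGen F q m s ⟨0, h0⟩) = 0) ∧
  (∀ (i : ℕ) (hi : i + 1 < m),
      T (uGen F q m s ⟨i + 1, hi⟩) =
        polySmul ((pShift q i) ^ (s ⟨i, by omega⟩ - s ⟨i + 1, hi⟩))
          (uGen F q m s ⟨i, by omega⟩)) ∧
  (∀ (g : Polynomial F) (u : Uspace F q m s),
      T (polySmul (g.comp (X + C 1)) u) = polySmul g (T u))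

/-- The linear map `F[X] → End_F(U)`, `g ↦ T^j ∘ g(E)`, whose image is the subspace
`T^j·𝓔` of `End_F(U)`. -/
noncomputable def psiMap {F : Type*} [Field F] (q : Polynomial F) (m : ℕ) (s : Fin m → ℕ)
    (T : Module.End F (Uspace F q m s)) (j : ℕ) :
    Polynomial F →ₗ[F] Module.End F (Uspace F q m s) :=
  (LinearMap.mulLeft F (T ^ j)).comp (Polynomial.aeval (Eop F q m s)).toLinearMap

/-- The projection `U → U_{i+1}` onto the `i`-th summand (0-based). -/
noncomputable def projU (F : Type*) [Field F] (q : Polynomial F) (m : ℕ) (s : Fin m → ℕ)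
    (i : Fin m) : Uspace F q m s →ₗ[F] Polynomial F ⧸ Ideal.span {(pShift q i) ^ (s i)} :=
  LinearMap.proj i

/-- The submodule `U^{(i)} = U₁ ⊕ ⋯ ⊕ U_i` of `U` (0-based: the components `j ≥ i`
vanish). -/
noncomputable def Usub (F : Type*) [Field F] (q : Polynomial F) (m : ℕ) (s : Fin m → ℕ)
    (i : ℕ) : Submodule F (Uspace F q m s) :=
  ⨅ j : Fin m, ⨅ _ : i ≤ (j : ℕ), LinearMap.ker (projU F q m s j)

/-- A subspace `W ⊆ V` is invariant under a set `S` of endomorphisms of `V`. -/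
def InvariantUnder {F V : Type*} [Field F] [AddCommGroup V] [Module F V]
    (S : Set (Module.End F V)) (W : Submodule F V) : Prop :=
  ∀ f ∈ S, ∀ u ∈ W, f u ∈ W

/-- The nilpotency series `0 = U^{(0)} ⊆ U^{(1)} ⊆ ⋯` of `V` relative to a set `N` of
endomorphisms (the action of the nilpotent radical): `U^{(k+1)}/U^{(k)}` is the 0-weight
space of `N` acting on `V/U^{(k)}`, i.e. `U^{(k+1)} = {u | f u ∈ U^{(k)} for all f ∈ N}`. -/
noncomputable def nilpSeries {F V : Type*} [Field F] [AddCommGroup V] [Module F V]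
    (N : Set (Module.End F V)) : ℕ → Submodule F V
  | 0 => ⊥
  | k + 1 => ⨅ f ∈ N, (nilpSeries N k).comap f

/-- `V` has nilpotency length `m` relative to the set `N` of endomorphisms. -/
def HasNilpLength {F V : Type*} [Field F] [AddCommGroup V] [Module F V]
    (N : Set (Module.End F V)) (m : ℕ) : Prop :=
  nilpSeries N m = ⊤ ∧ ∀ k < m, nilpSeries N k ≠ ⊤

/-- `V` is a linked module relative to the acting Lie algebra (realized as the set `S` of
endomorphisms) with nilpotent radical acting through the set `N` of endomorphisms:
`V` is nonzero, `N` acts by nilpotent operators (admissibility), and each nilpotency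
factor `U^{(k+1)}/U^{(k)}` is uniserial over `g/n`, i.e. the invariant submodules lying
between `U^{(k)}` and `U^{(k+1)}` form a chain. -/
def IsLinked {F V : Type*} [Field F] [AddCommGroup V] [Module F V]
    (S N : Set (Module.End F V)) : Prop :=
  (⊥ : Submodule F V) ≠ ⊤ ∧
  (∀ f ∈ N, IsNilpotent f) ∧
  ∀ (k : ℕ) (W₁ W₂ : Submodule F V),
    InvariantUnder S W₁ → InvariantUnder S W₂ →
    nilpSeries N k ≤ W₁ → W₁ ≤ nilpSeries N (k + 1) →
    nilpSeries N k ≤ W₂ → W₂ ≤ nilpSeries N (k + 1) →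
    W₁ ≤ W₂ ∨ W₂ ≤ W₁

/-- The set of endomorphisms of `V` coming from the nilpotent radical
`n = ⁅h, rad(h)⁆` of a Lie subalgebra `h ⊆ gl(V)`. -/
def nilpRadSet {F V : Type*} [Field F] [AddCommGroup V] [Module F V]
    (h : LieSubalgebra F (Module.End F V)) : Set (Module.End F V) :=
  (fun z : h => (z : Module.End F V)) ''
    {z : h | z ∈ ⁅(⊤ : LieIdeal F h), LieAlgebra.radical F h⁆}
section Infra

variable {F : Type*} [Field F] {q : Polynomial F} {m : ℕ} {s : Fin m → ℕ}

/-- abbreviation for the quotient map onto the `i`-th component. -/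
noncomputable abbrev Qmk (q : Polynomial F) (s : Fin m → ℕ) (i : Fin m) :
    Polynomial F →+* Polynomial F ⧸ Ideal.span {(pShift q i) ^ (s i)} :=
  Ideal.Quotient.mk (Ideal.span {(pShift q i) ^ (s i)})

lemma Qmk_C_mul (i : Fin m) (c : F) (y : Polynomial F ⧸ Ideal.span {(pShift q i) ^ (s i)}) :
    Qmk q s i (C c) * y = c • y := by
  obtain ⟨x, rfl⟩ := Ideal.Quotient.mk_surjective y
  show Qmk q s i (C c) * Qmk q s i x = _
  rw [← map_mul, ← smul_eq_C_mul]
  rfl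

lemma polySmul_apply (g : Polynomial F) (u : Uspace F q m s) (i : Fin m) :
    polySmul g u i = Qmk q s i g * u i := rfl

lemma polySmul_add (g : Polynomial F) (u v : Uspace F q m s) :
    polySmul g (u + v) = polySmul g u + polySmul g v := by
  funext i; show Qmk q s i g * (u i + v i) = _; rw [mul_add]; rfl

lemma polySmul_add_left (f g : Polynomial F) (u : Uspace F q m s) :
    polySmul (f + g) u = polySmul f u + polySmul g u := by
  funext i; show Qmk q s i (f + g) * u i = _; rw [map_add, add_mul]; rfl

lemma polySmul_polySmul (f g : Polynomial F) (u : Uspace F q m s) :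
    polySmul f (polySmul g u) = polySmul (f * g) u := by
  funext i; show Qmk q s i f * (Qmk q s i g * u i) = Qmk q s i (f * g) * u i
  rw [map_mul, mul_assoc]

lemma polySmul_one (u : Uspace F q m s) : polySmul 1 u = u := by
  funext i; show Qmk q s i 1 * u i = u i; rw [map_one, one_mul]

lemma polySmul_zero (g : Polynomial F) : polySmul g (0 : Uspace F q m s) = 0 := by
  funext i; show Qmk q s i g * 0 = 0; rw [mul_zero]

lemma polySmul_zero_left (u : Uspace F q m s) : polySmul 0 u = 0 := by
  funext i; show Qmk q s i 0 * u i = 0; rw [map_zero, zero_mul]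

lemma polySmul_smul (c : F) (g : Polynomial F) (u : Uspace F q m s) :
    polySmul (C c * g) u = c • polySmul g u := by
  funext i
  show Qmk q s i (C c * g) * u i = c • (Qmk q s i g * u i)
  rw [map_mul, mul_assoc, Qmk_C_mul]

lemma uGen_apply_same (i : Fin m) : uGen F q m s i i = 1 := Pi.single_eq_same i 1

lemma uGen_apply_ne {i j : Fin m} (h : j ≠ i) : uGen F q m s i j = 0 := Pi.single_eq_of_ne h 1

lemma polySmul_uGen (g : Polynomial F) (i : Fin m) :
    polySmul g (uGen F q m s i) = Pi.single i (Qmk q s i g) := by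
  funext j
  rw [polySmul_apply]
  by_cases h : j = i
  · subst h
    rw [uGen_apply_same, mul_one, Pi.single_eq_same]
  · rw [uGen_apply_ne h, mul_zero, Pi.single_eq_of_ne h]

lemma Uspace_sum_apply {ι : Type*} (S : Finset ι) (f : ι → Uspace F q m s) (j : Fin m) :
    (∑ i ∈ S, f i) j = ∑ i ∈ S, f i j := Finset.sum_apply j S f

lemma Uspace_decomp (u : Uspace F q m s) (a : Fin m → Polynomial F)
    (ha : ∀ i, Qmk q s i (a i) = u i) :
    u = ∑ i : Fin m, polySmul (a i) (uGen F q m s i) := by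
  funext j
  rw [Uspace_sum_apply]
  have : ∀ i : Fin m, polySmul (a i) (uGen F q m s i) j
      = (Pi.single i (Qmk q s i (a i)) : Uspace F q m s) j := by
    intro i; rw [polySmul_uGen]
  rw [Finset.sum_congr rfl (fun i _ => this i), Finset.sum_pi_single]
  simp [ha]

lemma Aop_apply (u : Uspace F q m s) : Aop F q m s u = polySmul X u := rfl

lemma Eop_apply (u : Uspace F q m s) (i : Fin m) :
    Eop F q m s u i = Qmk q s i (X + C (i : F)) * u i := rfl

lemma aeval_Aop (g : Polynomial F) (u : Uspace F q m s) :
    Polynomial.aeval (Aop F q m s) g u = polySmul g u := by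
  induction g using Polynomial.induction_on' with
  | add f g hf hg =>
    rw [map_add, LinearMap.add_apply, hf, hg, polySmul_add_left]
  | monomial n c =>
    have hpow : ∀ (n : ℕ) (u : Uspace F q m s), (Aop F q m s ^ n) u = polySmul (X ^ n) u := by
      intro n
      induction n with
      | zero => intro u; rw [pow_zero, pow_zero, polySmul_one]; rfl
      | succ n ih =>
        intro u
        rw [pow_succ, Module.End.mul_apply, Aop_apply, ih, polySmul_polySmul, ← pow_succ]
    rw [Polynomial.aeval_monomial, Module.End.mul_apply, hpow,
      Module.algebraMap_end_apply, ← polySmul_smul, C_mul_X_pow_eq_monomial]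

end Infra
section Comp

variable {F : Type*} [Field F]

lemma comp_add_add (f : Polynomial F) (c d : F) :
    (f.comp (X + C c)).comp (X + C d) = f.comp (X + C (d + c)) := by
  rw [Polynomial.comp_assoc]
  congr 1
  rw [add_comp, X_comp, C_comp, add_assoc, ← C_add]

lemma comp_sub_cancel (f : Polynomial F) (c : F) :
    (f.comp (X + C c)).comp (X - C c) = f := by
  rw [Polynomial.comp_assoc]
  have : (X + C c).comp (X - C c) = (X : Polynomial F) := by
    simp [add_comp]
  rw [this, comp_X]

lemma comp_sub_add_cancel (f : Polynomial F) (c : F) :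
    (f.comp (X - C c)).comp (X + C c) = f := by
  rw [Polynomial.comp_assoc]
  have : (X - C c).comp (X + C c) = (X : Polynomial F) := by
    simp [sub_comp]
  rw [this, comp_X]

lemma pShift_comp_sub {q : Polynomial F} (i t : ℕ) :
    (pShift q (i + t)).comp (X - C (t : F)) = pShift q i := by
  unfold pShift
  rw [Polynomial.comp_assoc]
  congr 1
  rw [add_comp, X_comp, C_comp]
  push_cast
  rw [C_add]
  ring

lemma pShift_comp_add {q : Polynomial F} (i t : ℕ) :
    (pShift q i).comp (X + C (t : F)) = pShift q (i + t) := by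
  rw [← pShift_comp_sub i t, comp_sub_add_cancel]

lemma pShift_succ_comp_sub_one {q : Polynomial F} (i : ℕ) :
    (pShift q (i + 1)).comp (X - C (1 : F)) = pShift q i := by
  have := pShift_comp_sub (q := q) i 1
  simpa using this

lemma pShift_irreducible {q : Polynomial F} (hq : Irreducible q) (i : ℕ) :
    Irreducible (pShift q i) := by
  have key : ∀ (f : Polynomial F) (c : F), IsUnit (f.comp (X + C c)) → IsUnit f := by
    intro f c hu
    obtain ⟨r, hr, hrf⟩ := Polynomial.isUnit_iff.mp hu
    have : f = C r := by
      have h2 := congrArg (fun p => Polynomial.comp p (X - C c)) hrf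
      simpa [comp_sub_cancel] using h2.symm
    rw [this]
    exact hr.map Polynomial.C
  constructor
  · intro hu
    exact hq.not_isUnit (key q (i : F) hu)
  · intro a b hab
    have hq' : q = a.comp (X - C (i : F)) * b.comp (X - C (i : F)) := by
      have : (pShift q i).comp (X - C (i : F)) = q := comp_sub_cancel q _
      rw [← this, hab, mul_comp]
    rcases hq.isUnit_or_isUnit hq' with h | h
    · left
      have : a = (a.comp (X - C (i : F))).comp (X + C (i : F)) := (comp_sub_add_cancel a _).symm
      rw [this]
      obtain ⟨r, hr, hrf⟩ := Polynomial.isUnit_iff.mp h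
      rw [← hrf]
      simpa using hr.map Polynomial.C
    · right
      have : b = (b.comp (X - C (i : F))).comp (X + C (i : F)) := (comp_sub_add_cancel b _).symm
      rw [this]
      obtain ⟨r, hr, hrf⟩ := Polynomial.isUnit_iff.mp h
      rw [← hrf]
      simpa using hr.map Polynomial.C


lemma pShift_zero {F : Type*} [Field F] {q : Polynomial F} : pShift q 0 = q := by
  unfold pShift
  rw [Nat.cast_zero, C_0, add_zero, comp_X]

end Comp
section Stab

variable {F V : Type*} [Field F] [AddCommGroup V] [Module F V]

/-- The subalgebra of endomorphisms preserving a subspace `W`. -/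
def stabAlg (W : Submodule F V) : Subalgebra F (Module.End F V) where
  carrier := {f | ∀ u ∈ W, f u ∈ W}
  mul_mem' := fun {a b} ha hb u hu => ha _ (hb u hu)
  add_mem' := fun {a b} ha hb u hu => W.add_mem (ha u hu) (hb u hu)
  algebraMap_mem' := fun c u hu => by
    have : (algebraMap F (Module.End F V) c) u = c • u := rfl
    rw [this]
    exact W.smul_mem c hu

lemma mem_stabAlg {W : Submodule F V} {f : Module.End F V} :
    f ∈ stabAlg W ↔ ∀ u ∈ W, f u ∈ W := Iff.rfl

lemma aeval_mem_stabAlg {W : Submodule F V} {f : Module.End F V} (hf : f ∈ stabAlg W)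
    (g : Polynomial F) : Polynomial.aeval f g ∈ stabAlg W := by
  have h1 : Polynomial.aeval f g ∈ Algebra.adjoin F {f} :=
    Polynomial.aeval_mem_adjoin_singleton F f
  have h2 : Algebra.adjoin F {f} ≤ stabAlg W :=
    Algebra.adjoin_le (Set.singleton_subset_iff.mpr hf)
  exact h2 h1

end Stab

section Inv

variable {F : Type*} [Field F] {q : Polynomial F} {m : ℕ} {s : Fin m → ℕ}

lemma polySmul_mem {W : Submodule F (Uspace F q m s)}
    (hWA : ∀ u ∈ W, Aop F q m s u ∈ W) (g : Polynomial F) {u : Uspace F q m s} (hu : u ∈ W) :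
    polySmul g u ∈ W := by
  have h1 : Polynomial.aeval (Aop F q m s) g ∈ stabAlg W := aeval_mem_stabAlg hWA g
  have h2 := h1 u hu
  rwa [aeval_Aop] at h2

lemma invariantUnder_of_stab {T : Module.End F (Uspace F q m s)}
    {h : LieSubalgebra F (Module.End F (Uspace F q m s))}
    (hsub : (h : Set (Module.End F (Uspace F q m s))) ⊆
      ↑((F ∙ Aop F q m s) ⊔ (⨆ j : Fin m, LinearMap.range (psiMap q m s T j))))
    {W : Submodule F (Uspace F q m s)}
    (hA : Aop F q m s ∈ stabAlg W) (hE : Eop F q m s ∈ stabAlg W) (hT : T ∈ stabAlg W) :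
    InvariantUnder (h : Set (Module.End F (Uspace F q m s))) W := by
  intro f hf u hu
  have hf' : f ∈ (F ∙ Aop F q m s) ⊔ (⨆ j : Fin m, LinearMap.range (psiMap q m s T j)) :=
    hsub hf
  have hle : (F ∙ Aop F q m s) ⊔ (⨆ j : Fin m, LinearMap.range (psiMap q m s T j)) ≤
      Subalgebra.toSubmodule (stabAlg W) := by
    apply sup_le
    · rw [Submodule.span_singleton_le_iff_mem]
      exact hA
    · apply iSup_le
      intro j
      rintro x hx
      obtain ⟨g, rfl⟩ := hx
      have heq : psiMap q m s T (j : ℕ) g = (T ^ (j : ℕ)) * (Polynomial.aeval (Eop F q m s) g) := rfl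
      show psiMap q m s T (j : ℕ) g ∈ stabAlg W
      rw [heq]
      exact mul_mem (pow_mem hT _) (aeval_mem_stabAlg hE g)
  exact hle hf' u hu

lemma T_apply_decomp {T : Module.End F (Uspace F q m s)} (hT : IsTmap q m s T)
    (u : Uspace F q m s) (a : Fin m → Polynomial F) (ha : ∀ i, Qmk q s i (a i) = u i) :
    T u = ∑ i : Fin m, polySmul ((a i).comp (X - C 1)) (T (uGen F q m s i)) := by
  conv_lhs => rw [Uspace_decomp u a ha]
  rw [map_sum]
  apply Finset.sum_congr rfl
  intro i _
  have : polySmul (a i) (uGen F q m s i)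
      = polySmul (((a i).comp (X - C 1)).comp (X + C 1)) (uGen F q m s i) := by
    rw [comp_sub_add_cancel]
  rw [this, hT.2.2]

end Inv
section Tcomp

variable {F : Type*} [Field F] {q : Polynomial F} {m : ℕ} {s : Fin m → ℕ}

lemma T_comp (hs1 : ∀ i, s i = 1) {T : Module.End F (Uspace F q m s)} (hT : IsTmap q m s T)
    (u : Uspace F q m s) (a : Fin m → Polynomial F) (ha : ∀ i, Qmk q s i (a i) = u i)
    (j : Fin m) :
    T u j = if h : (j : ℕ) + 1 < m
      then Qmk q s j ((a ⟨(j : ℕ) + 1, h⟩).comp (X - C 1)) else 0 := by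
  rw [T_apply_decomp hT u a ha, Uspace_sum_apply]
  have hterm : ∀ i : Fin m, polySmul ((a i).comp (X - C 1)) (T (uGen F q m s i)) j
      = if _ : (i : ℕ) = (j : ℕ) + 1
        then Qmk q s j ((a i).comp (X - C 1)) else 0 := by
    intro i
    rcases i with ⟨iv, hiv⟩
    match iv with
    | 0 =>
      rw [hT.1 (by omega)]
      rw [polySmul_zero]
      have hc : ((⟨0, hiv⟩ : Fin m) : ℕ) = 0 := rfl
      rw [dif_neg (by rw [hc]; omega)]
      rfl
    | n + 1 =>
      have hn : n < m := by omega
      rw [hT.2.1 n hiv]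
      have hsz : s ⟨n, hn⟩ - s ⟨n + 1, hiv⟩ = 0 := by
        rw [hs1, hs1]
      rw [hsz, pow_zero, polySmul_one, polySmul_uGen]
      have hc : ((⟨n + 1, hiv⟩ : Fin m) : ℕ) = n + 1 := rfl
      by_cases hje : n = (j : ℕ)
      · have heq : (⟨n, hn⟩ : Fin m) = j := Fin.ext hje
        rw [heq, Pi.single_eq_same, dif_pos (by rw [hc, hje])]
      · have hne : j ≠ (⟨n, hn⟩ : Fin m) := by
          intro hh
          exact hje (by rw [hh])
        rw [Pi.single_eq_of_ne hne, dif_neg (by rw [hc]; omega)]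
  rw [Finset.sum_congr rfl (fun i _ => hterm i)]
  by_cases h : (j : ℕ) + 1 < m
  · rw [dif_pos h]
    rw [Finset.sum_eq_single (⟨(j : ℕ) + 1, h⟩ : Fin m)]
    · rw [dif_pos rfl]
    · intro i _ hne
      rw [dif_neg]
      intro h1
      exact hne (Fin.ext h1)
    · intro habs; exact absurd (Finset.mem_univ _) habs
  · rw [dif_neg h]
    apply Finset.sum_eq_zero
    intro i _
    rw [dif_neg]
    intro h1
    have : (i : ℕ) < m := i.isLt
    omega

lemma Tpow_comp (hs1 : ∀ i, s i = 1) {T : Module.End F (Uspace F q m s)} (hT : IsTmap q m s T) :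
    ∀ (t : ℕ) (u : Uspace F q m s) (a : Fin m → Polynomial F),
      (∀ i, Qmk q s i (a i) = u i) → ∀ j : Fin m,
      (T ^ t) u j = if h : (j : ℕ) + t < m
        then Qmk q s j ((a ⟨(j : ℕ) + t, h⟩).comp (X - C (t : F))) else 0 := by
  intro t
  induction t with
  | zero =>
    intro u a ha j
    have h : (j : ℕ) + 0 < m := by omega
    rw [dif_pos h]
    have h1 : (⟨(j : ℕ) + 0, h⟩ : Fin m) = j := Fin.ext rfl
    rw [h1]
    have h2 : (X - C ((0 : ℕ) : F)) = (X : Polynomial F) := by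
      push_cast; rw [C_0, sub_zero]
    rw [h2, comp_X, pow_zero]
    exact (ha j).symm
  | succ t ih =>
    intro u a ha j
    classical
    set b : (i : Fin m) → Polynomial F := fun i =>
      if h : (i : ℕ) + 1 < m then (a ⟨(i : ℕ) + 1, h⟩).comp (X - C 1) else 0 with hbdef
    have hb : ∀ i, Qmk q s i (b i) = T u i := by
      intro i
      rw [T_comp hs1 hT u a ha i]
      by_cases h : (i : ℕ) + 1 < m
      · rw [dif_pos h, hbdef]; simp only [dif_pos h]
      · rw [dif_neg h, hbdef]; simp only [dif_neg h, map_zero]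
    have hps : (T ^ (t + 1)) u = (T ^ t) (T u) := by
      rw [pow_succ, Module.End.mul_apply]
    rw [hps, ih (T u) b hb j]
    by_cases h1 : (j : ℕ) + (t + 1) < m
    · have h0 : (j : ℕ) + t < m := by omega
      rw [dif_pos h0, dif_pos h1, hbdef]
      have hco : ((⟨(j : ℕ) + t, h0⟩ : Fin m) : ℕ) = (j : ℕ) + t := rfl
      have h2 : ((⟨(j : ℕ) + t, h0⟩ : Fin m) : ℕ) + 1 < m := by rw [hco]; omega
      simp only [dif_pos h2]
      have h3 : (⟨((⟨(j : ℕ) + t, h0⟩ : Fin m) : ℕ) + 1, h2⟩ : Fin m)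
          = ⟨(j : ℕ) + (t + 1), h1⟩ := Fin.ext rfl
      rw [h3, Polynomial.comp_assoc]
      congr 2
      rw [sub_comp, X_comp, C_comp, sub_sub, ← C_add]
      push_cast
      ring_nf
    · by_cases h0 : (j : ℕ) + t < m
      · rw [dif_pos h0, dif_neg h1, hbdef]
        have hco : ((⟨(j : ℕ) + t, h0⟩ : Fin m) : ℕ) = (j : ℕ) + t := rfl
        have h2 : ¬ (((⟨(j : ℕ) + t, h0⟩ : Fin m) : ℕ) + 1 < m) := by rw [hco]; omega
        simp only [dif_neg h2, zero_comp, map_zero]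
      · rw [dif_neg h0, dif_neg h1]

end Tcomp
section Reach

variable {F : Type*} [Field F] {q : Polynomial F} {m : ℕ} {s : Fin m → ℕ}

lemma dvd_comp {p a r : Polynomial F} (h : p ∣ a) : p.comp r ∣ a.comp r := by
  obtain ⟨c, rfl⟩ := h
  exact ⟨c.comp r, mul_comp p c r⟩

lemma reach (hq : Irreducible q) (hs1 : ∀ i, s i = 1) {T : Module.End F (Uspace F q m s)}
    (hT : IsTmap q m s T) (W : Submodule F (Uspace F q m s))
    (hWA : ∀ u ∈ W, Aop F q m s u ∈ W) (hWT : ∀ u ∈ W, T u ∈ W)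
    (k : Fin m) (u : Uspace F q m s) (hu : u ∈ W) (huk : u k ≠ 0) :
    ∀ v : Uspace F q m s, (∀ i : Fin m, (k : ℕ) < (i : ℕ) → v i = 0) → v ∈ W := by
  classical
  have hdvd_iff : ∀ (i : Fin m) (f : Polynomial F),
      Qmk q s i f = 0 ↔ pShift q (i : ℕ) ∣ f := by
    intro i f
    rw [Ideal.Quotient.eq_zero_iff_mem, Ideal.mem_span_singleton, hs1 i, pow_one]
  have hTpow : ∀ (t : ℕ) (w : Uspace F q m s), w ∈ W → (T ^ t) w ∈ W := by
    intro t
    induction t with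
    | zero => intro w hw; simpa using hw
    | succ t ih =>
      intro w hw
      rw [pow_succ, Module.End.mul_apply]
      exact ih _ (hWT w hw)
  set S : Finset (Fin m) := Finset.univ.filter (fun i => ∃ w ∈ W, w i ≠ 0) with hSdef
  have hkS : k ∈ S := Finset.mem_filter.mpr ⟨Finset.mem_univ _, ⟨u, hu, huk⟩⟩
  have hSne : S.Nonempty := ⟨k, hkS⟩
  set km := S.max' hSne with hkmdef
  have hkkm : (k : ℕ) ≤ (km : ℕ) := Fin.le_def.mp (S.le_max' k hkS)
  obtain ⟨u', hu'W, hu'km⟩ : ∃ w ∈ W, w km ≠ 0 :=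
    (Finset.mem_filter.mp (S.max'_mem hSne)).2
  have hmax : ∀ w ∈ W, ∀ i : Fin m, (km : ℕ) < (i : ℕ) → w i = 0 := by
    intro w hw i hi
    by_contra hne
    have hiS : i ∈ S := Finset.mem_filter.mpr ⟨Finset.mem_univ _, ⟨w, hw, hne⟩⟩
    have hle := Fin.le_def.mp (S.le_max' i hiS)
    omega
  set a : Fin m → Polynomial F := fun i => (Ideal.Quotient.mk_surjective (u' i)).choose
    with hadef
  have ha : ∀ i, Qmk q s i (a i) = u' i :=
    fun i => (Ideal.Quotient.mk_surjective (u' i)).choose_spec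
  have main : ∀ j : ℕ, j ≤ (km : ℕ) + 1 → ∀ v : Uspace F q m s,
      (∀ i : Fin m, j ≤ (i : ℕ) → v i = 0) → v ∈ W := by
    intro j
    induction j with
    | zero =>
      intro _ v hv
      have hv0 : v = 0 := funext fun i => hv i (Nat.zero_le _)
      rw [hv0]
      exact W.zero_mem
    | succ j ih =>
      intro hj v hv
      have hjkm : j ≤ (km : ℕ) := by omega
      have hjm : j < m := lt_of_le_of_lt hjkm km.isLt
      set jF : Fin m := ⟨j, hjm⟩ with hjFdef
      set t : ℕ := (km : ℕ) - j with htdef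
      have hjt : j + t = (km : ℕ) := by omega
      set w := (T ^ t) u' with hwdef
      have hwW : w ∈ W := hTpow t u' hu'W
      have hwc : ∀ i : Fin m, w i = if h : (i : ℕ) + t < m
          then Qmk q s i ((a ⟨(i : ℕ) + t, h⟩).comp (X - C (t : F))) else 0 :=
        fun i => Tpow_comp hs1 hT t u' a ha i
      set α : Polynomial F := (a km).comp (X - C (t : F)) with hαdef
      have hwj : w jF = Qmk q s jF α := by
        rw [hwc jF]
        have h : (jF : ℕ) + t < m := by
          show j + t < m
          rw [hjt]
          exact km.isLt
        rw [dif_pos h]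
        have heq : (⟨(jF : ℕ) + t, h⟩ : Fin m) = km := Fin.ext hjt
        rw [heq]
      have hαnd : ¬ pShift q j ∣ α := by
        intro hdvd
        have h2 := dvd_comp (r := X + C (t : F)) hdvd
        rw [hαdef, comp_sub_add_cancel, pShift_comp_add, hjt] at h2
        exact hu'km (by rw [← ha km]; exact (hdvd_iff km (a km)).mpr h2)
      have hwjne : w jF ≠ 0 := by
        rw [hwj]
        intro h0
        exact hαnd ((hdvd_iff jF α).mp h0)
      have hwhigh : ∀ i : Fin m, j < (i : ℕ) → w i = 0 := by
        intro i hi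
        rw [hwc i]
        by_cases h : (i : ℕ) + t < m
        · rw [dif_pos h]
          have hgt : (km : ℕ) < ((⟨(i : ℕ) + t, h⟩ : Fin m) : ℕ) := by
            show (km : ℕ) < (i : ℕ) + t
            omega
          have hz : u' ⟨(i : ℕ) + t, h⟩ = 0 := hmax u' hu'W _ hgt
          have hdv : pShift q ((i : ℕ) + t) ∣ a ⟨(i : ℕ) + t, h⟩ :=
            (hdvd_iff ⟨(i : ℕ) + t, h⟩ _).mp (by rw [ha]; exact hz)
          apply (hdvd_iff i _).mpr
          rw [← pShift_comp_sub (i : ℕ) t]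
          exact dvd_comp hdv
        · rw [dif_neg h]
      set wlow : Uspace F q m s := fun i => if j ≤ (i : ℕ) then 0 else w i with hwlowdef
      have hwlowW : wlow ∈ W := ih (by omega) wlow (fun i hi => if_pos hi)
      set w' := w - wlow with hw'def
      have hw'W : w' ∈ W := W.sub_mem hwW hwlowW
      have hw'c : ∀ i : Fin m, w' i = if (i : ℕ) = j then Qmk q s i α else 0 := by
        intro i
        have hsub : w' i = w i - wlow i := rfl
        rw [hsub]
        rcases lt_trichotomy (i : ℕ) j with h | h | h
        · have h1 : wlow i = w i := if_neg (by omega)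
          rw [h1, sub_self, if_neg (by omega)]
        · have hij : i = jF := Fin.ext h
          have h1 : wlow i = 0 := if_pos (le_of_eq h.symm)
          rw [h1, sub_zero, if_pos h, hij]
          exact hwj
        · have h1 : wlow i = 0 := if_pos (by omega)
          rw [h1, sub_zero, hwhigh i h, if_neg (by omega)]
      have hirr : Irreducible (pShift q j) := pShift_irreducible hq j
      obtain ⟨b, c, hbc⟩ := hirr.coprime_iff_not_dvd.mpr hαnd
      set d : Polynomial F := (Ideal.Quotient.mk_surjective (v jF)).choose with hddef
      have hd : Qmk q s jF d = v jF := (Ideal.Quotient.mk_surjective (v jF)).choose_spec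
      set vlow : Uspace F q m s := fun i => if j ≤ (i : ℕ) then 0 else v i with hvlowdef
      have hvlowW : vlow ∈ W := ih (by omega) vlow (fun i hi => if_pos hi)
      have hsplit : v = vlow + polySmul (d * c) w' := by
        funext i
        have h1 : (vlow + polySmul (d * c) w') i = vlow i + Qmk q s i (d * c) * w' i := rfl
        rw [h1, hw'c i]
        rcases lt_trichotomy (i : ℕ) j with h | h | h
        · have h2 : vlow i = v i := if_neg (by omega)
          rw [h2, if_neg (by omega), mul_zero, add_zero]
        · have hij : i = jF := Fin.ext h
          have h2 : vlow i = 0 := if_pos (le_of_eq h.symm)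
          rw [h2, if_pos h, zero_add, hij, ← hd, ← map_mul]
          have hca : d * c * α = d - d * b * pShift q j := by
            have h3 : c * α = 1 - b * pShift q j := by
              rw [← hbc]; ring
            rw [mul_assoc, h3]; ring
          rw [hca, map_sub]
          have h4 : Qmk q s jF (d * b * pShift q j) = 0 := by
            apply (hdvd_iff jF _).mpr
            exact ⟨d * b, by ring⟩
          rw [h4, sub_zero]
        · have h2 : vlow i = 0 := if_pos (by omega)
          rw [h2, if_neg (by omega), mul_zero, add_zero]
          exact hv i (by omega)
      rw [hsplit]
      exact W.add_mem hvlowW (polySmul_mem hWA _ hw'W)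
  intro v hv
  exact main ((km : ℕ) + 1) le_rfl v (fun i hi => hv i (by omega))

end Reach
section Forward

variable (F : Type*) [Field F] (q : Polynomial F) (m : ℕ) (s : Fin m → ℕ)

/-- The socle-type submodule `⊕ᵢ (pᵢ^{sᵢ-1})/(pᵢ^{sᵢ})`. -/
noncomputable def socSub : Submodule F (Uspace F q m s) where
  carrier := {u | ∀ i : Fin m, ∃ b : Polynomial F,
    u i = Qmk q s i (pShift q (i : ℕ) ^ (s i - 1) * b)}
  add_mem' := by
    intro u v hu hv i
    obtain ⟨bu, hbu⟩ := hu i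
    obtain ⟨bv, hbv⟩ := hv i
    refine ⟨bu + bv, ?_⟩
    have : (u + v) i = u i + v i := rfl
    rw [this, hbu, hbv, mul_add, map_add]
  zero_mem' := by
    intro i
    exact ⟨0, by rw [mul_zero, map_zero]; rfl⟩
  smul_mem' := by
    intro c u hu i
    obtain ⟨b, hb⟩ := hu i
    refine ⟨C c * b, ?_⟩
    have h1 : (c • u) i = c • (u i) := rfl
    rw [h1, ← Qmk_C_mul i c (u i), hb, ← map_mul]
    congr 1
    ring

/-- The submodule `U₁` (elements supported on the 0-th component). -/
def firstSub : Submodule F (Uspace F q m s) where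
  carrier := {u | ∀ i : Fin m, (i : ℕ) ≠ 0 → u i = 0}
  add_mem' := by
    intro u v hu hv i hi
    have : (u + v) i = u i + v i := rfl
    rw [this, hu i hi, hv i hi, add_zero]
  zero_mem' := fun i _ => rfl
  smul_mem' := by
    intro c u hu i hi
    have : (c • u) i = c • (u i) := rfl
    rw [this, hu i hi, smul_zero]

variable {F q m s}

lemma mem_socSub {u : Uspace F q m s} :
    u ∈ socSub F q m s ↔ ∀ i : Fin m, ∃ b : Polynomial F,
      u i = Qmk q s i (pShift q (i : ℕ) ^ (s i - 1) * b) := Iff.rfl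

lemma mem_firstSub {u : Uspace F q m s} :
    u ∈ firstSub F q m s ↔ ∀ i : Fin m, (i : ℕ) ≠ 0 → u i = 0 := Iff.rfl

lemma Aop_mem_stab_socSub : Aop F q m s ∈ stabAlg (socSub F q m s) := by
  intro u hu i
  obtain ⟨b, hb⟩ := hu i
  refine ⟨X * b, ?_⟩
  have h1 : Aop F q m s u i = Qmk q s i X * u i := rfl
  rw [h1, hb, ← map_mul]
  congr 1
  ring

lemma Eop_mem_stab_socSub : Eop F q m s ∈ stabAlg (socSub F q m s) := by
  intro u hu i
  obtain ⟨b, hb⟩ := hu i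
  refine ⟨(X + C (i : F)) * b, ?_⟩
  rw [Eop_apply, hb, ← map_mul]
  congr 1
  ring

lemma Aop_mem_stab_firstSub : Aop F q m s ∈ stabAlg (firstSub F q m s) := by
  intro u hu i hi
  have h1 : Aop F q m s u i = Qmk q s i X * u i := rfl
  rw [h1, hu i hi, mul_zero]

lemma Eop_mem_stab_firstSub : Eop F q m s ∈ stabAlg (firstSub F q m s) := by
  intro u hu i hi
  rw [Eop_apply, hu i hi, mul_zero]

lemma T_mem_stab_socSub (hdata : GoodData F q 0 m s → True) (hdec : ∀ i j : Fin m, i ≤ j → s j ≤ s i)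
    (hpos : ∀ i, 1 ≤ s i)
    {T : Module.End F (Uspace F q m s)} (hT : IsTmap q m s T) :
    T ∈ stabAlg (socSub F q m s) := by
  intro u hu
  classical
  set a : Fin m → Polynomial F := fun i =>
    pShift q (i : ℕ) ^ (s i - 1) * (hu i).choose with hadef
  have ha : ∀ i, Qmk q s i (a i) = u i := fun i => ((hu i).choose_spec).symm
  rw [T_apply_decomp hT u a ha]
  apply Submodule.sum_mem
  intro i _
  rcases i with ⟨iv, hiv⟩
  match iv with
  | 0 =>
    rw [hT.1 (by omega), polySmul_zero]
    exact (socSub F q m s).zero_mem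
  | n + 1 =>
    have hn : n < m := by omega
    rw [hT.2.1 n hiv, polySmul_polySmul]
    rw [polySmul_uGen]
    intro j
    by_cases hj : j = (⟨n, hn⟩ : Fin m)
    · subst hj
      rw [Pi.single_eq_same]
      refine ⟨((hu ⟨n + 1, hiv⟩).choose).comp (X - C 1), ?_⟩
      congr 1
      have hle : s ⟨n + 1, hiv⟩ ≤ s ⟨n, hn⟩ :=
        hdec ⟨n, hn⟩ ⟨n + 1, hiv⟩ (by rw [Fin.le_def]; show n ≤ n + 1; omega)
      have hpos' : 1 ≤ s ⟨n + 1, hiv⟩ := hpos _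
      rw [hadef]
      show (pShift q (n + 1) ^ (s ⟨n + 1, hiv⟩ - 1) * (hu ⟨n + 1, hiv⟩).choose).comp (X - C 1)
          * pShift q n ^ (s ⟨n, hn⟩ - s ⟨n + 1, hiv⟩)
        = pShift q n ^ (s ⟨n, hn⟩ - 1) * ((hu ⟨n + 1, hiv⟩).choose).comp (X - C 1)
      rw [mul_comp, pow_comp, pShift_succ_comp_sub_one, mul_right_comm, ← pow_add]
      congr 2
      omega
    · rw [Pi.single_eq_of_ne hj]
      exact ⟨0, by rw [mul_zero, map_zero]⟩

lemma T_mem_stab_firstSub {T : Module.End F (Uspace F q m s)} (hT : IsTmap q m s T) :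
    T ∈ stabAlg (firstSub F q m s) := by
  intro u hu
  classical
  set a : Fin m → Polynomial F := fun i =>
    if h : (i : ℕ) = 0 then (Ideal.Quotient.mk_surjective (u i)).choose else 0 with hadef
  have ha : ∀ i, Qmk q s i (a i) = u i := by
    intro i
    by_cases h : (i : ℕ) = 0
    · rw [hadef]
      simp only [dif_pos h]
      exact (Ideal.Quotient.mk_surjective (u i)).choose_spec
    · rw [hadef]
      simp only [dif_neg h, map_zero]
      exact (hu i h).symm
  rw [T_apply_decomp hT u a ha]
  apply Submodule.sum_mem
  intro i _
  rcases i with ⟨iv, hiv⟩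
  match iv with
  | 0 =>
    rw [hT.1 (by omega), polySmul_zero]
    exact (firstSub F q m s).zero_mem
  | n + 1 =>
    have hz : a ⟨n + 1, hiv⟩ = 0 := by
      rw [hadef]
      have : ((⟨n + 1, hiv⟩ : Fin m) : ℕ) ≠ 0 := by
        show n + 1 ≠ 0
        omega
      simp only [dif_neg this]
    rw [hz, zero_comp, polySmul_zero_left]
    exact (firstSub F q m s).zero_mem

end Forward

/-- Let `h` be any Lie subalgebra of
`g = ⟨A⟩ ⊕ 𝓔 ⊕ T𝓔 ⊕ ⋯ ⊕ T^{m−1}𝓔 ⊆ gl(U)` containing `s = ⟨A⟩ ⊕ ⟨T⟩`.  Then `U` is a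
uniserial `h`-module (the `h`-invariant subspaces of `U` form a chain) if and only if
`s₁ = s₂ = ⋯ = s_m = 1`. -/
theorem uniserial_iff_all_exponents_one
    {F : Type*} [Field F] (q : Polynomial F) (d m : ℕ) (s : Fin m → ℕ)
    (hdata : GoodData F q d m s)
    (T : Module.End F (Uspace F q m s)) (hT : IsTmap q m s T)
    (h : LieSubalgebra F (Module.End F (Uspace F q m s)))
    (hA : Aop F q m s ∈ h) (hTmem : T ∈ h)
    (hsub : (h : Set (Module.End F (Uspace F q m s))) ⊆
      ↑((F ∙ Aop F q m s) ⊔ (⨆ j : Fin m, LinearMap.range (psiMap q m s T j)))) :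
    (∀ W₁ W₂ : Submodule F (Uspace F q m s),
        InvariantUnder (h : Set (Module.End F (Uspace F q m s))) W₁ →
        InvariantUnder (h : Set (Module.End F (Uspace F q m s))) W₂ →
        W₁ ≤ W₂ ∨ W₂ ≤ W₁) ↔
      (∀ i : Fin m, s i = 1) := by
  classical
  have hm1 : 1 < m := hdata.hm
  have h0m : 0 < m := by omega
  constructor
  · intro hchain
    by_contra hns
    push_neg at hns
    obtain ⟨i0, hi0⟩ := hns
    have h2 : 2 ≤ s ⟨0, h0m⟩ := by
      have hd := hdata.dec ⟨0, h0m⟩ i0 (by rw [Fin.le_def]; exact Nat.zero_le _)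
      have hp := hdata.pos i0
      omega
    have inv1 : InvariantUnder (h : Set (Module.End F (Uspace F q m s))) (socSub F q m s) :=
      invariantUnder_of_stab hsub Aop_mem_stab_socSub Eop_mem_stab_socSub
        (T_mem_stab_socSub (fun _ => trivial) hdata.dec hdata.pos hT)
    have inv2 : InvariantUnder (h : Set (Module.End F (Uspace F q m s))) (firstSub F q m s) :=
      invariantUnder_of_stab hsub Aop_mem_stab_firstSub Eop_mem_stab_firstSub
        (T_mem_stab_firstSub hT)
    rcases hchain _ _ inv1 inv2 with hle | hle
    · set i₁ : Fin m := ⟨1, hm1⟩ with hi₁def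
      set x : Uspace F q m s := polySmul (pShift q 1 ^ (s i₁ - 1)) (uGen F q m s i₁) with hxdef
      have hxsoc : x ∈ socSub F q m s := by
        rw [hxdef, polySmul_uGen]
        intro j
        by_cases hj : j = i₁
        · subst hj
          rw [Pi.single_eq_same]
          exact ⟨1, by rw [mul_one]⟩
        · rw [Pi.single_eq_of_ne hj]
          exact ⟨0, by rw [mul_zero, map_zero]⟩
      have hx1 : x i₁ = 0 := (hle hxsoc) i₁ (by show (1 : ℕ) ≠ 0; omega)
      rw [hxdef, polySmul_uGen, Pi.single_eq_same] at hx1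
      have hdvd : pShift q 1 ^ (s i₁) ∣ pShift q 1 ^ (s i₁ - 1) := by
        rw [← Ideal.mem_span_singleton]
        exact Ideal.Quotient.eq_zero_iff_mem.mp hx1
      obtain ⟨c, hc⟩ := hdvd
      have hps1 : s i₁ = (s i₁ - 1) + 1 := by
        have := hdata.pos i₁
        omega
      rw [hps1, pow_succ] at hc
      have hpne : pShift q 1 ^ (s i₁ - 1) ≠ 0 :=
        pow_ne_zero _ (pShift_irreducible hdata.irr 1).ne_zero
      have hone : 1 = pShift q 1 * c := by
        apply mul_left_cancel₀ hpne
        rw [mul_one, ← mul_assoc]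
        exact hc
      exact (pShift_irreducible hdata.irr 1).not_isUnit (IsUnit.of_mul_eq_one _ hone.symm)
    · have hu0first : uGen F q m s ⟨0, h0m⟩ ∈ firstSub F q m s := by
        intro j hj
        refine uGen_apply_ne ?_
        intro hh
        apply hj
        rw [hh]
      obtain ⟨b, hb⟩ := (hle hu0first) ⟨0, h0m⟩
      rw [uGen_apply_same] at hb
      have hmem : (1 : Polynomial F) - pShift q 0 ^ (s ⟨0, h0m⟩ - 1) * b ∈
          Ideal.span {pShift q ((⟨0, h0m⟩ : Fin m) : ℕ) ^ (s ⟨0, h0m⟩)} := by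
        rw [← Ideal.Quotient.eq]
        rw [← hb, map_one]
      obtain ⟨c, hc⟩ := Ideal.mem_span_singleton.mp hmem
      have hs0 : s ⟨0, h0m⟩ - 1 = (s ⟨0, h0m⟩ - 2) + 1 := by omega
      have hs0' : s ⟨0, h0m⟩ = (s ⟨0, h0m⟩ - 1) + 1 := by omega
      have hqdvd : q ∣ 1 := by
        refine ⟨q ^ (s ⟨0, h0m⟩ - 2) * b + q ^ (s ⟨0, h0m⟩ - 1) * c, ?_⟩
        have h1 : (1 : Polynomial F) = pShift q 0 ^ (s ⟨0, h0m⟩ - 1) * b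
            + pShift q 0 ^ (s ⟨0, h0m⟩) * c := by
          linear_combination hc
        rw [pShift_zero] at h1
        have e1 : q ^ (s ⟨0, h0m⟩ - 1) = q * q ^ (s ⟨0, h0m⟩ - 2) := by
          rw [← pow_succ', ← hs0]
        have e2 : q ^ (s ⟨0, h0m⟩) = q * q ^ (s ⟨0, h0m⟩ - 1) := by
          rw [← pow_succ', ← hs0']
        rw [h1, e2, e1]
        ring
      exact hdata.irr.not_isUnit (isUnit_of_dvd_one hqdvd)
  · intro hs1 W₁ W₂ hinv₁ hinv₂
    have hWA1 : ∀ u ∈ W₁, Aop F q m s u ∈ W₁ := fun u hu => hinv₁ _ hA u hu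
    have hWT1 : ∀ u ∈ W₁, T u ∈ W₁ := fun u hu => hinv₁ _ hTmem u hu
    have hWA2 : ∀ u ∈ W₂, Aop F q m s u ∈ W₂ := fun u hu => hinv₂ _ hA u hu
    have hWT2 : ∀ u ∈ W₂, T u ∈ W₂ := fun u hu => hinv₂ _ hTmem u hu
    by_cases h12 : W₁ ≤ W₂
    · exact Or.inl h12
    · right
      obtain ⟨v, hv1, hv2⟩ := SetLike.not_le_iff_exists.mp h12
      intro w hw
      by_cases hw0 : w = 0
      · rw [hw0]
        exact W₁.zero_mem
      have hex : ∃ i : Fin m, w i ≠ 0 := by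
        by_contra hno
        push_neg at hno
        exact hw0 (funext hno)
      set Sw : Finset (Fin m) := Finset.univ.filter (fun i => w i ≠ 0) with hSwdef
      have hSwne : Sw.Nonempty :=
        ⟨hex.choose, Finset.mem_filter.mpr ⟨Finset.mem_univ _, hex.choose_spec⟩⟩
      set k := Sw.max' hSwne with hkdef
      have hwk : w k ≠ 0 := (Finset.mem_filter.mp (Sw.max'_mem hSwne)).2
      have hwtop : ∀ i : Fin m, (k : ℕ) < (i : ℕ) → w i = 0 := by
        intro i hi
        by_contra hne
        have hiS : i ∈ Sw := Finset.mem_filter.mpr ⟨Finset.mem_univ _, hne⟩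
        have := Fin.le_def.mp (Sw.le_max' i hiS)
        omega
      by_cases hup : ∃ (i : Fin m) (u : Uspace F q m s), u ∈ W₁ ∧ u i ≠ 0 ∧ (k : ℕ) ≤ (i : ℕ)
      · obtain ⟨i, u, huW, hui, hki⟩ := hup
        exact reach hdata.irr hs1 hT W₁ hWA1 hWT1 i u huW hui w
          (fun l hl => hwtop l (by omega))
      · push_neg at hup
        exfalso
        apply hv2
        apply reach hdata.irr hs1 hT W₂ hWA2 hWT2 k w hw hwk v
        intro l hl
        by_contra hvl
        have := hup l v hv1 hvl
        omega
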